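/- Let X = {x ∈ ℝⁿ | H_x x ≤ h_x} be nonempty and compact, and Y = {y ∈ ℝᵖ | H_y y ≤ h_y}. Given γ ∈ ℝᵖ and Γ ∈ ℝ^{p×n}, if γ + ΓX ⊆ Y, then there exists Λ ∈ ℝ^{m_y×m_x} with Λ ≥ 0 entrywise, Λ H_x = H_y Γ, and Λ h_x ≤ h_y − H_y γ. -/

import Mathlib

open Pointwise

open Finset Matrix
open scoped InnerProductSpace

/-- Conical Carathéodory: any nonnegative combination can be rewritten with
linearly independent active generators. -/
lemma carath_aux {E : Type*} [AddCommGroup E] [Module ℝ E] {ι : Type*} [Fintype ι]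
    [DecidableEq ι] (v : ι → E) :
    ∀ (k : ℕ) (μ : ι → ℝ), (∀ i, 0 ≤ μ i) →
      (Finset.univ.filter fun i => μ i ≠ 0).card ≤ k →
      ∃ ν : ι → ℝ, (∀ i, 0 ≤ ν i) ∧ (∑ i, ν i • v i = ∑ i, μ i • v i) ∧
        LinearIndependent ℝ (fun i : {i // ν i ≠ 0} => v i) := by
  intro k
  induction k with
  | zero =>
    intro μ hμ hcard
    have hμ0 : ∀ i, μ i = 0 := by
      intro i
      by_contra hi
      have : i ∈ Finset.univ.filter fun i => μ i ≠ 0 := by simp [hi]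
      have := Finset.card_pos.mpr ⟨i, this⟩
      omega
    refine ⟨μ, hμ, rfl, ?_⟩
    haveI : IsEmpty {i // μ i ≠ 0} := ⟨fun ⟨i, hi⟩ => hi (hμ0 i)⟩
    exact linearIndependent_empty_type
  | succ k ih =>
    intro μ hμ hcard
    by_cases hLI : LinearIndependent ℝ (fun i : {i // μ i ≠ 0} => v i)
    · exact ⟨μ, hμ, rfl, hLI⟩
    · -- extract a relation
      obtain ⟨g, hgsum, j₀, hgj₀⟩ := Fintype.not_linearIndependent_iff.mp hLI
      -- the key step, applied to the relation with a positive entry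
      have key : ∀ G : ι → ℝ, (∑ i, G i • v i = 0) → (∀ i, G i ≠ 0 → μ i ≠ 0) →
          (∃ i, 0 < G i) →
          ∃ ν : ι → ℝ, (∀ i, 0 ≤ ν i) ∧ (∑ i, ν i • v i = ∑ i, μ i • v i) ∧
            LinearIndependent ℝ (fun i : {i // ν i ≠ 0} => v i) := by
        intro G hGsum hGsupp ⟨i₁, hi₁⟩
        have hSne : (Finset.univ.filter fun i => 0 < G i).Nonempty := ⟨i₁, by simp [hi₁]⟩
        obtain ⟨i₀, hi₀mem, hi₀⟩ :=
          Finset.exists_mem_eq_inf' hSne (fun i => μ i / G i)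
        set t : ℝ := (Finset.univ.filter fun i => 0 < G i).inf' hSne (fun i => μ i / G i)
          with ht
        have hGi₀ : 0 < G i₀ := by simpa using hi₀mem
        have htnonneg : 0 ≤ t := by
          rw [hi₀]
          exact div_nonneg (hμ i₀) hGi₀.le
        set ν : ι → ℝ := fun i => μ i - t * G i with hν
        have hνnonneg : ∀ i, 0 ≤ ν i := by
          intro i
          rcases le_or_gt (G i) 0 with h | h
          · have : t * G i ≤ 0 := mul_nonpos_of_nonneg_of_nonpos htnonneg h
            have := hμ i
            simp only [hν]; linarith
          · have hmem : i ∈ Finset.univ.filter fun i => 0 < G i := by simp [h]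
            have : t ≤ μ i / G i := Finset.inf'_le _ hmem
            have : t * G i ≤ μ i := by
              rw [← div_mul_cancel₀ (μ i) h.ne']
              exact mul_le_mul_of_nonneg_right this h.le
            simp only [hν]; linarith
        have hνi₀ : ν i₀ = 0 := by
          simp only [hν, hi₀]
          field_simp
          simp
        have hsum : ∑ i, ν i • v i = ∑ i, μ i • v i := by
          simp only [hν, sub_smul, Finset.sum_sub_distrib, mul_smul, ← Finset.smul_sum,
            hGsum, smul_zero, sub_zero]
        have hμi₀ : μ i₀ ≠ 0 := hGsupp i₀ hGi₀.ne'
        have hsubset : (Finset.univ.filter fun i => ν i ≠ 0) ⊆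
            (Finset.univ.filter fun i => μ i ≠ 0).erase i₀ := by
          intro i hi
          simp only [Finset.mem_filter, Finset.mem_univ, true_and] at hi
          apply Finset.mem_erase.mpr
          constructor
          · rintro rfl; exact hi hνi₀
          · simp only [Finset.mem_filter, Finset.mem_univ, true_and]
            intro hμi
            apply hi
            have : G i = 0 := by
              by_contra hGi
              exact hGsupp i hGi hμi
            simp [hν, hμi, this]
        have hcard' : (Finset.univ.filter fun i => ν i ≠ 0).card ≤ k := by
          have h1 := Finset.card_le_card hsubset
          have h2 : i₀ ∈ Finset.univ.filter fun i => μ i ≠ 0 := by simp [hμi₀]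
          have h3 := Finset.card_erase_of_mem h2
          have h4 := Finset.card_pos.mpr ⟨i₀, h2⟩
          omega
        obtain ⟨ν', h1, h2, h3⟩ := ih ν hνnonneg hcard'
        exact ⟨ν', h1, h2.trans hsum, h3⟩
      -- extend g to ι
      set G : ι → ℝ := fun i => if h : μ i ≠ 0 then g ⟨i, h⟩ else 0 with hG
      have hGsum : ∑ i, G i • v i = 0 := by
        rw [← hgsum]
        have h1 : ∑ i, G i • v i = ∑ i ∈ Finset.univ.filter (fun i => μ i ≠ 0), G i • v i := by
          refine (Finset.sum_filter_of_ne ?_).symm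
          intro x _ hx
          intro hμx
          apply hx
          simp [hG, hμx]
        rw [h1, Finset.sum_subtype (p := fun i => μ i ≠ 0)
          (Finset.univ.filter (fun i => μ i ≠ 0)) (by intro x; simp) (fun i => G i • v i)]
        refine Finset.sum_congr rfl ?_
        intro i _
        simp [hG, i.2]
      have hGsupp : ∀ i, G i ≠ 0 → μ i ≠ 0 := by
        intro i hGi
        by_contra hμi
        exact hGi (by simp [hG, hμi])
      rcases lt_trichotomy (g j₀) 0 with hneg | hzero | hpos
      · refine key (-G) (by simp [hGsum]) (fun i hi => hGsupp i (by simpa using hi)) ?_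
        exact ⟨j₀, by simp only [Pi.neg_apply, hG, dif_pos j₀.2, neg_pos]; simpa using hneg⟩
      · exact absurd hzero hgj₀
      · refine key G hGsum hGsupp ⟨j₀, ?_⟩
        simp only [hG]
        rw [dif_pos j₀.2]
        simpa using hpos

/-- A finitely generated convex cone is closed. -/
lemma isClosed_coneSet {E : Type*} [NormedAddCommGroup E] [NormedSpace ℝ E]
    [FiniteDimensional ℝ E] {ι : Type*} [Fintype ι] [DecidableEq ι] (v : ι → E) :
    IsClosed {x : E | ∃ μ : ι → ℝ, (∀ i, 0 ≤ μ i) ∧ ∑ i, μ i • v i = x} := by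
  classical
  have key : {x : E | ∃ μ : ι → ℝ, (∀ i, 0 ≤ μ i) ∧ ∑ i, μ i • v i = x}
      = ⋃ s : Finset ι, {x : E | LinearIndependent ℝ (fun i : {i // i ∈ s} => v i) ∧
          ∃ μ : ι → ℝ, (∀ i, 0 ≤ μ i) ∧ (∀ i, μ i ≠ 0 → i ∈ s) ∧ ∑ i, μ i • v i = x} := by
    ext x
    simp only [Set.mem_setOf_eq, Set.mem_iUnion]
    constructor
    · rintro ⟨μ, hμ, rfl⟩
      obtain ⟨ν, hν, hsum, hLI⟩ := carath_aux v (Finset.univ.filter fun i => μ i ≠ 0).card μ hμ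
        le_rfl
      refine ⟨Finset.univ.filter fun i => ν i ≠ 0, ?_, ν, hν, fun i hi => by simp [hi], hsum⟩
      refine (linearIndependent_equiv (Equiv.subtypeEquivRight (p := fun i => ν i ≠ 0)
        (q := fun i => i ∈ Finset.univ.filter fun i => ν i ≠ 0) (by intro i; simp))).mp ?_
      have hcomp : ((fun i : {i // i ∈ Finset.univ.filter fun i => ν i ≠ 0} => v ↑i) ∘
          (Equiv.subtypeEquivRight (p := fun i => ν i ≠ 0)
            (q := fun i => i ∈ Finset.univ.filter fun i => ν i ≠ 0) (by intro i; simp)))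
          = fun i : {i // ν i ≠ 0} => v ↑i := by
        funext i
        simp [Equiv.subtypeEquivRight]
        rfl
      rw [hcomp]
      exact hLI
    · rintro ⟨s, hLI, μ, hμ, hsupp, rfl⟩
      exact ⟨μ, hμ, rfl⟩
  rw [key]
  apply isClosed_iUnion_of_finite
  intro s
  by_cases hLI : LinearIndependent ℝ (fun i : {i // i ∈ s} => v i)
  · -- this set is the image of the nonnegative orthant under an injective linear map
    set L : ({i // i ∈ s} → ℝ) →ₗ[ℝ] E :=
      Fintype.linearCombination ℝ (fun i : {i // i ∈ s} => v i) with hL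
    have hLapp : ∀ μ, L μ = ∑ i : {i // i ∈ s}, μ i • v i := fun μ => by
      simp [hL, Fintype.linearCombination_apply]
    have hinj : Function.Injective L := by
      intro a b hab
      funext i
      have := Fintype.linearIndependent_iff.mp hLI (a - b) ?_ i
      · have : a i - b i = 0 := by simpa using this
        linarith
      · simp only [Pi.sub_apply, sub_smul, Finset.sum_sub_distrib]
        rw [← hLapp, ← hLapp, hab, sub_self]
    have himg : {x : E | LinearIndependent ℝ (fun i : {i // i ∈ s} => v i) ∧
          ∃ μ : ι → ℝ, (∀ i, 0 ≤ μ i) ∧ (∀ i, μ i ≠ 0 → i ∈ s) ∧ ∑ i, μ i • v i = x}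
        = L '' {μ : {i // i ∈ s} → ℝ | ∀ i, 0 ≤ μ i} := by
      ext x
      simp only [Set.mem_setOf_eq, Set.mem_image]
      constructor
      · rintro ⟨-, μ, hμ, hsupp, rfl⟩
        refine ⟨fun i => μ i, fun i => hμ i, ?_⟩
        rw [hLapp]
        rw [← Finset.sum_subtype (p := fun i => i ∈ s) s (fun x => Iff.rfl) (fun i => μ i • v i)]
        apply Finset.sum_subset s.subset_univ
        intro i _ hi
        have : μ i = 0 := by by_contra h; exact hi (hsupp i h)
        simp [this]
      · rintro ⟨μ', hμ', rfl⟩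
        refine ⟨hLI, fun i => if h : i ∈ s then μ' ⟨i, h⟩ else 0, ?_, ?_, ?_⟩
        · intro i
          by_cases h : i ∈ s
          · simp only [dif_pos h]; exact hμ' _
          · simp [h]
        · intro i hi
          by_contra h
          exact hi (by simp [h])
        · rw [hLapp]
          have h1 : ∑ i : {i // i ∈ s}, μ' i • v ↑i
              = ∑ i : {i // i ∈ s}, (fun j => if h : j ∈ s then μ' ⟨j, h⟩ else 0) ↑i • v ↑i := by
            refine Finset.sum_congr rfl fun i _ => ?_
            simp [i.2]
          rw [h1, ← Finset.sum_subtype (p := fun i => i ∈ s) s (fun x => Iff.rfl)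
            (fun i => (fun j => if h : j ∈ s then μ' ⟨j, h⟩ else 0) i • v i)]
          exact (Finset.sum_subset s.subset_univ (fun i _ hi => by simp [hi])).symm
    rw [himg]
    have horth : IsClosed {μ : {i // i ∈ s} → ℝ | ∀ i, 0 ≤ μ i} := by
      have : {μ : {i // i ∈ s} → ℝ | ∀ i, 0 ≤ μ i} = ⋂ i, {μ | 0 ≤ μ i} := by
        ext; simp [Set.mem_iInter]
      rw [this]
      exact isClosed_iInter fun i => isClosed_le continuous_const (continuous_apply i)
    exact (L.isClosedEmbedding_of_injective (LinearMap.ker_eq_bot.mpr hinj)).isClosedMap _ horth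
  · convert isClosed_empty
    ext x
    simp only [Set.mem_setOf_eq, Set.mem_empty_iff_false, iff_false]
    rintro ⟨h, -⟩
    exact hLI h

/-- Affine Farkas lemma in an inner product space. -/
lemma farkas_inner {E : Type*} [NormedAddCommGroup E] [InnerProductSpace ℝ E]
    [FiniteDimensional ℝ E] {ι : Type*} [Fintype ι] [DecidableEq ι]
    (w : ι → E) (β : ι → ℝ) (c : E) (d : ℝ)
    (hne : ∃ x, ∀ i, ⟪w i, x⟫_ℝ ≤ β i)
    (h : ∀ x, (∀ i, ⟪w i, x⟫_ℝ ≤ β i) → ⟪c, x⟫_ℝ ≤ d) :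
    ∃ μ : ι → ℝ, (∀ i, 0 ≤ μ i) ∧ ∑ i, μ i • w i = c ∧ ∑ i, μ i * β i ≤ d := by
  classical
  haveI : FiniteDimensional ℝ (WithLp 2 (E × ℝ)) :=
    (WithLp.linearEquiv 2 ℝ (E × ℝ)).symm.finiteDimensional
  set v : Option ι → (WithLp 2 (E × ℝ)) := fun o => Option.elim o ((WithLp.equiv 2 (E × ℝ)).symm (0, 1))
    (fun i => (WithLp.equiv 2 (E × ℝ)).symm (w i, β i)) with hv
  have hvfst : ∀ o, (v o).fst = Option.elim o 0 w := by rintro (_ | i) <;> simp [hv]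
  have hvsnd : ∀ o, (v o).snd = Option.elim o 1 β := by rintro (_ | i) <;> simp [hv]
  set C : Set (WithLp 2 (E × ℝ)) := {x : (WithLp 2 (E × ℝ)) | ∃ μ : Option ι → ℝ, (∀ i, 0 ≤ μ i) ∧ ∑ i, μ i • v i = x} with hC
  have hCclosed : IsClosed C := isClosed_coneSet v
  set K : ConvexCone ℝ (WithLp 2 (E × ℝ)) :=
    { carrier := C
      smul_mem' := by
        rintro a ha x ⟨μ, hμ, rfl⟩
        exact ⟨fun i => a * μ i, fun i => mul_nonneg ha.le (hμ i), by
          simp [mul_smul, ← Finset.smul_sum]⟩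
      add_mem' := by
        rintro x ⟨μ, hμ, rfl⟩ y ⟨ν, hν, rfl⟩
        exact ⟨fun i => μ i + ν i, fun i => add_nonneg (hμ i) (hν i), by
          simp [add_smul, Finset.sum_add_distrib]⟩ } with hK
  have hKne : (K : Set (WithLp 2 (E × ℝ))).Nonempty := ⟨0, ⟨0, fun i => le_rfl, by simp⟩⟩
  set u : (WithLp 2 (E × ℝ)) := (WithLp.equiv 2 (E × ℝ)).symm (c, d) with hu
  set fstL : (WithLp 2 (E × ℝ)) →ₗ[ℝ] E := (LinearMap.fst ℝ E ℝ).comp (WithLp.linearEquiv 2 ℝ (E × ℝ)).toLinearMap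
    with hfstL
  set sndL : (WithLp 2 (E × ℝ)) →ₗ[ℝ] ℝ := (LinearMap.snd ℝ E ℝ).comp (WithLp.linearEquiv 2 ℝ (E × ℝ)).toLinearMap
    with hsndL
  have hfstapp : ∀ z : WithLp 2 (E × ℝ), fstL z = z.fst := fun z => rfl
  have hsndapp : ∀ z : WithLp 2 (E × ℝ), sndL z = z.snd := fun z => rfl
  by_cases huC : u ∈ C
  · obtain ⟨μ, hμ, hsum⟩ := huC
    refine ⟨fun i => μ (some i), fun i => hμ _, ?_, ?_⟩
    · have h1 := congrArg fstL hsum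
      rw [map_sum] at h1
      simp only [_root_.map_smul, hfstapp, WithLp.smul_fst, hvfst] at h1
      rw [Fintype.sum_option] at h1
      simpa [hu] using h1
    · have h1 := congrArg sndL hsum
      rw [map_sum] at h1
      simp only [_root_.map_smul, hsndapp, WithLp.smul_snd, hvsnd] at h1
      rw [Fintype.sum_option] at h1
      simp only [Option.elim, smul_eq_mul, mul_one] at h1
      have : μ none + ∑ i, μ (some i) * β i = d := by simpa [hu] using h1
      have := hμ none
      linarith
  · obtain ⟨y, hy1, hy2⟩ :=
      ProperCone.hyperplane_separation' (E := WithLp 2 (E × ℝ)) (x₀ := u)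
        ({ carrier := C
           add_mem' := fun hx hy => K.add_mem' hx hy
           zero_mem' := ⟨0, fun i => le_rfl, by simp⟩
           smul_mem' := by
             rintro c x ⟨μ, hμ, rfl⟩
             exact ⟨fun i => (c : ℝ) * μ i, fun i => mul_nonneg c.2 (hμ i), by
               simp [mul_smul, ← Finset.smul_sum, NNReal.smul_def]⟩
           isClosed' := hCclosed } : ProperCone ℝ (WithLp 2 (E × ℝ))) (by exact huC)
    rw [real_inner_comm] at hy2
    exfalso
    have hvK : ∀ j, v j ∈ K := by
      intro j
      refine ⟨fun o => if o = j then 1 else 0, fun o => by positivity, ?_⟩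
      simp [ite_smul]
    set z : E := y.fst with hz
    set t : ℝ := y.snd with htdef
    have hinner : ∀ j, ⟪v j, y⟫_ℝ = ⟪(v j).fst, z⟫_ℝ + (v j).snd * t := by
      intro j
      rw [WithLp.prod_inner_apply]
      simp [RCLike.inner_apply, hz, htdef, mul_comm]
    have ht : 0 ≤ t := by
      have := hy1 _ (hvK none)
      rw [hinner none] at this
      simpa [hvfst, hvsnd] using this
    have hwz : ∀ i, 0 ≤ ⟪w i, z⟫_ℝ + β i * t := by
      intro i
      have := hy1 _ (hvK (some i))
      rw [hinner (some i)] at this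
      simpa [hvfst, hvsnd] using this
    have hyu : ⟪z, c⟫_ℝ + t * d < 0 := by
      rw [show ⟪y, u⟫_ℝ = ⟪z, c⟫_ℝ + t * d by
        rw [WithLp.prod_inner_apply]
        simp [RCLike.inner_apply, hu, hz, htdef, mul_comm]] at hy2
      exact hy2
    rcases eq_or_lt_of_le ht with ht0 | htpos
    · -- t = 0
      obtain ⟨x0, hx0⟩ := hne
      have hx0d : ⟪c, x0⟫_ℝ ≤ d := h x0 hx0
      have hzc : ⟪z, c⟫_ℝ < 0 := by rw [← ht0] at hyu; simpa using hyu
      set e : ℝ := ⟪c, z⟫_ℝ with he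
      have hee : e < 0 := by rw [he, real_inner_comm]; exact hzc
      set s : ℝ := (d + 1 - ⟪c, x0⟫_ℝ) / (-e) with hs
      have hspos : 0 < s := by
        apply div_pos (by linarith) (by linarith)
      have hfeas : ∀ i, ⟪w i, x0 - s • z⟫_ℝ ≤ β i := by
        intro i
        rw [inner_sub_right, inner_smul_right]
        have h1 : 0 ≤ ⟪w i, z⟫_ℝ := by have := hwz i; rw [← ht0] at this; simpa using this
        have h2 : 0 ≤ s * ⟪w i, z⟫_ℝ := mul_nonneg hspos.le h1
        have := hx0 i
        linarith
      have := h _ hfeas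
      rw [inner_sub_right, inner_smul_right, ← he] at this
      have hne' : -e ≠ 0 := by linarith
      have hse : s * e = -(d + 1 - ⟪c, x0⟫_ℝ) := by
        rw [hs, show (d + 1 - ⟪c, x0⟫_ℝ) / -e * e = -((d + 1 - ⟪c, x0⟫_ℝ) / -e * -e) by ring,
          div_mul_cancel₀ _ hne']
      rw [hse] at this
      linarith
    · -- t > 0
      set x : E := (-t⁻¹) • z with hxdef
      have hfeas : ∀ i, ⟪w i, x⟫_ℝ ≤ β i := by
        intro i
        rw [hxdef, inner_smul_right]
        have h1 := hwz i
        have h3 : 0 < t⁻¹ := inv_pos.mpr htpos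
        have h5 : t⁻¹ * (β i * t) = β i := by field_simp
        nlinarith [mul_nonneg h3.le h1, h5]
      have hcx := h x hfeas
      rw [hxdef, inner_smul_right] at hcx
      have h4 : ⟪c, z⟫_ℝ = ⟪z, c⟫_ℝ := real_inner_comm _ _
      have h7 : -⟪c, z⟫_ℝ ≤ t * d := by
        have h8 := mul_le_mul_of_nonneg_left hcx htpos.le
        calc -⟪c, z⟫_ℝ = t * (-t⁻¹ * ⟪c, z⟫_ℝ) := by
              rw [neg_mul, mul_neg, ← mul_assoc, mul_inv_cancel₀ htpos.ne', one_mul]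
          _ ≤ t * d := h8
      linarith

/-- Affine Farkas lemma, matrix form. -/
lemma farkas_matrix {n m : ℕ} (A : Matrix (Fin m) (Fin n) ℝ) (b : Fin m → ℝ) (c : Fin n → ℝ)
    (d : ℝ) (hne : ∃ x, A.mulVec x ≤ b) (h : ∀ x, A.mulVec x ≤ b → c ⬝ᵥ x ≤ d) :
    ∃ lam : Fin m → ℝ, (∀ i, 0 ≤ lam i) ∧ (∀ j, ∑ i, lam i * A i j = c j) ∧ lam ⬝ᵥ b ≤ d := by
  have keyw : ∀ (x : EuclideanSpace ℝ (Fin n)) (i : Fin m),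
      ⟪(WithLp.equiv 2 (Fin n → ℝ)).symm (A i), x⟫_ℝ = A.mulVec x i := by
    intro x i
    simp [PiLp.inner_apply, RCLike.inner_apply, Matrix.mulVec, dotProduct, mul_comm]
  have keyc : ∀ (x : EuclideanSpace ℝ (Fin n)),
      ⟪(WithLp.equiv 2 (Fin n → ℝ)).symm c, x⟫_ℝ = c ⬝ᵥ x := by
    intro x
    simp [PiLp.inner_apply, RCLike.inner_apply, dotProduct, mul_comm]
  obtain ⟨μ, hμ, hsum, hd⟩ := farkas_inner (E := EuclideanSpace ℝ (Fin n))
    (fun i => (WithLp.equiv 2 (Fin n → ℝ)).symm (A i)) b ((WithLp.equiv 2 (Fin n → ℝ)).symm c) d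
    (by
      obtain ⟨x0, hx0⟩ := hne
      exact ⟨WithLp.toLp 2 x0, fun i => by rw [keyw]; exact hx0 i⟩)
    (by
      intro x hx
      rw [keyc]
      exact h x (fun i => by rw [← keyw]; exact hx i))
  refine ⟨μ, hμ, ?_, hd⟩
  intro j
  have h1 := congrArg
    ((LinearMap.proj j).comp (WithLp.linearEquiv 2 ℝ (Fin n → ℝ)).toLinearMap) hsum
  rw [map_sum] at h1
  simpa [mul_comm] using h1

theorem ah_polytope_containment_necessity
    (n p mx my : ℕ) (Hx : Matrix (Fin mx) (Fin n) ℝ) (hx : Fin mx → ℝ)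
    (Hy : Matrix (Fin my) (Fin p) ℝ) (hy : Fin my → ℝ)
    (γ : Fin p → ℝ) (Γ : Matrix (Fin p) (Fin n) ℝ)
    (hXne : {x : Fin n → ℝ | Hx.mulVec x ≤ hx}.Nonempty)
    (hXcpt : IsCompact {x : Fin n → ℝ | Hx.mulVec x ≤ hx})
    (hsub : ({γ} + Γ.mulVec '' {x : Fin n → ℝ | Hx.mulVec x ≤ hx}) ⊆
      {y : Fin p → ℝ | Hy.mulVec y ≤ hy}) :
    ∃ Λ : Matrix (Fin my) (Fin mx) ℝ,
      (∀ i j, 0 ≤ Λ i j) ∧ Λ * Hx = Hy * Γ ∧ Λ.mulVec hx ≤ hy - Hy.mulVec γ := by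
  have key : ∀ i : Fin my, ∃ lam : Fin mx → ℝ, (∀ k, 0 ≤ lam k) ∧
      (∀ j, ∑ k, lam k * Hx k j = (Hy * Γ) i j) ∧ lam ⬝ᵥ hx ≤ hy i - Hy.mulVec γ i := by
    intro i
    apply farkas_matrix Hx hx (fun j => (Hy * Γ) i j) (hy i - Hy.mulVec γ i) hXne
    intro x hxX
    have hmem : γ + Γ.mulVec x ∈ ({γ} + Γ.mulVec '' {x : Fin n → ℝ | Hx.mulVec x ≤ hx}) := by
      exact Set.add_mem_add rfl ⟨x, hxX, rfl⟩
    have hle := hsub hmem i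
    rw [Matrix.mulVec_add, Pi.add_apply] at hle
    have heq : (fun j => (Hy * Γ) i j) ⬝ᵥ x = Hy.mulVec (Γ.mulVec x) i := by
      rw [Matrix.mulVec_mulVec]
      simp [Matrix.mulVec, dotProduct]
    linarith [heq ▸ hle]
  choose lam h1 h2 h3 using key
  refine ⟨Matrix.of lam, fun i j => h1 i j, ?_, ?_⟩
  · ext i j
    rw [Matrix.mul_apply]
    exact h2 i j
  · intro i
    simpa [Matrix.mulVec, Pi.sub_apply] using h3 i
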